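/- Let S ≥ 5 be odd and π(k) = 2k/(S(S+1)) on the cycle {1,...,S}, with the Metropolis–Hastings chain using nearest-neighbour proposal Q(x,y)=1/2. The conductance h(P) := min over A with π(A) < 1/2 of (Σ_{x∈A} π(x)P(x,Aᶜ))/π(A) satisfies (1 + √(1 + 2S(S+1)))/(S(S+1)) ≤ h(P) ≤ 2/(S+1). -/

import Mathlib

set_option linter.unusedSectionVars false
set_option linter.unusedTactic false
set_option linter.unusedVariables false
set_option maxHeartbeats 1000000

namespace MH16

open Fin.NatCast Fin.CommRing

lemma gauss (n : ℕ) : ∑ i ∈ Finset.range n, (i : ℝ) = n * (n - 1) / 2 := by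
  induction n with
  | zero => simp
  | succ m ih => rw [Finset.sum_range_succ, ih]; push_cast; ring

lemma sum_lin (c : ℝ) (n : ℕ) : ∑ i ∈ Finset.range n, (c + 2 * (i:ℝ)) = n * (c + n - 1) := by
  rw [Finset.sum_add_distrib, Finset.sum_const, Finset.card_range, ← Finset.mul_sum, gauss]
  push_cast; ring

variable (S : ℕ) [NeZero S]

noncomputable def wgt (j : Fin S) : ℝ := min ((j.val : ℝ) + 1) (((j + 1).val : ℝ) + 1)

noncomputable def brk (A : Finset (Fin S)) (x : Fin S) : ℝ :=
  (if x + 1 ∉ A then wgt S x else 0) + (if x - 1 ∉ A then wgt S (x - 1) else 0)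

noncomputable def FS (A : Finset (Fin S)) : ℝ := ∑ x ∈ A, brk S A x

noncomputable def WS (A : Finset (Fin S)) : ℝ := ∑ x ∈ A, (2 * ((x.val : ℝ) + 1))

def arc (a : Fin S) (L : ℕ) : Finset (Fin S) :=
  (Finset.range L).image (fun i : ℕ => a + (i : Fin S))

variable {S}

lemma val_add_one {j : Fin S} (hS : 5 ≤ S) : (j + 1).val = (j.val + 1) % S := by
  rw [Fin.val_add, Fin.val_one', Nat.mod_eq_of_lt (show 1 < S by omega)]

lemma neg_one_val (hS : 5 ≤ S) : ((-1 : Fin S)).val = S - 1 := by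
  have h : ((S - 1 : ℕ) : Fin S) = -1 := by
    push_cast [Nat.cast_sub (by omega : 1 ≤ S)]; simp
  rw [← h, Fin.val_cast_of_lt (by omega)]

lemma cast_succ_fin (i : ℕ) : ((i + 1 : ℕ) : Fin S) = (i : Fin S) + 1 := by push_cast; ring

lemma sub_one_eq (a : Fin S) (hS : 5 ≤ S) : a - 1 = a + ((S - 1 : ℕ) : Fin S) := by
  push_cast [Nat.cast_sub (by omega : 1 ≤ S)]; simp; ring

lemma mem_arc {a : Fin S} {L : ℕ} (hL : L ≤ S) {j : Fin S} :
    j ∈ arc S a L ↔ (j - a).val < L := by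
  simp only [arc, Finset.mem_image, Finset.mem_range]
  constructor
  · rintro ⟨i, hi, rfl⟩
    have h : a + (i : Fin S) - a = (i : Fin S) := by ring
    rw [h, Fin.val_cast_of_lt (lt_of_lt_of_le hi hL)]; exact hi
  · intro h
    exact ⟨(j - a).val, h, by rw [Fin.cast_val_eq_self]; ring⟩

lemma wgt_of_lt {j : Fin S} (hS : 5 ≤ S) (h : j.val + 1 < S) : wgt S j = (j.val : ℝ) + 1 := by
  have h1 : (j + 1).val = j.val + 1 := by rw [val_add_one hS, Nat.mod_eq_of_lt h]
  rw [wgt, h1]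
  push_cast
  exact min_eq_left (by linarith)

lemma wgt_of_eq {j : Fin S} (hS : 5 ≤ S) (h : j.val + 1 = S) : wgt S j = 1 := by
  have h1 : (j + 1).val = 0 := by rw [val_add_one hS, h, Nat.mod_self]
  rw [wgt, h1]
  have h2 : (0:ℝ) ≤ (j.val:ℝ) := by positivity
  push_cast
  rw [min_eq_right (by linarith)]
  norm_num

lemma WS_nonneg (A : Finset (Fin S)) : 0 ≤ WS S A :=
  Finset.sum_nonneg fun x _ => by positivity

lemma wgt_nonneg (j : Fin S) : 0 ≤ wgt S j := le_min (by positivity) (by positivity)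

lemma brk_nonneg (A : Finset (Fin S)) (x : Fin S) : 0 ≤ brk S A x := by
  unfold brk
  have := wgt_nonneg (S := S) x
  have := wgt_nonneg (S := S) (x - 1)
  positivity

lemma FS_nonneg (A : Finset (Fin S)) : 0 ≤ FS S A :=
  Finset.sum_nonneg fun x _ => brk_nonneg A x

lemma sum_arc (a : Fin S) {L : ℕ} (hL : L ≤ S) (f : Fin S → ℝ) :
    ∑ x ∈ arc S a L, f x = ∑ i ∈ Finset.range L, f (a + (i : Fin S)) := by
  apply Finset.sum_image
  intro i hi i' hi' hee
  have h1 : ((i : Fin S)) = (i' : Fin S) := add_left_cancel hee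
  have := congrArg Fin.val h1
  rwa [Fin.val_cast_of_lt (lt_of_lt_of_le (Finset.mem_range.1 hi) hL),
    Fin.val_cast_of_lt (lt_of_lt_of_le (Finset.mem_range.1 hi') hL)] at this

lemma val_add_cast (a : Fin S) {i : ℕ} (h : a.val + i < S) :
    (a + (i : Fin S)).val = a.val + i := by
  rw [Fin.val_add, Fin.val_cast_of_lt (by omega), Nat.mod_eq_of_lt h]

lemma val_add_cast' (a : Fin S) {i : ℕ} (h1 : S ≤ a.val + i) (h2 : i < S) :
    (a + (i : Fin S)).val = a.val + i - S := by
  rw [Fin.val_add, Fin.val_cast_of_lt h2]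
  have ha := a.isLt
  rw [Nat.mod_eq_sub_mod h1, Nat.mod_eq_of_lt (by omega)]

lemma WS_arc_nowrap (a : Fin S) {L : ℕ} (h : a.val + L ≤ S) :
    WS S (arc S a L) = L * (2 * a.val + L + 1) := by
  rw [WS, sum_arc a (by omega)]
  have h2 : ∑ i ∈ Finset.range L, (2 * (((a + (i : Fin S)).val : ℝ) + 1))
      = ∑ i ∈ Finset.range L, ((2 * (a.val : ℝ) + 2) + 2 * (i : ℝ)) :=
    Finset.sum_congr rfl (fun i hi => by
      rw [val_add_cast a (by have := Finset.mem_range.1 hi; omega)]; push_cast; ring)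
  rw [h2, sum_lin]; ring

lemma WS_arc_wrap (a : Fin S) {L : ℕ} (hw : S < a.val + L) (hL : L ≤ S) :
    WS S (arc S a L) = (S:ℝ) * (S+1) - a.val * (a.val + 1)
      + ((a.val:ℝ) + L - S) * (((a.val:ℝ) + L - S) + 1) := by
  have hK : S - a.val ≤ L := by omega
  have ha := a.isLt
  rw [WS, sum_arc a hL]
  rw [Finset.range_eq_Ico, ← Finset.sum_Ico_consecutive _ (Nat.zero_le (S - a.val)) hK]
  have e1 : ∑ i ∈ Finset.Ico 0 (S - a.val), (2 * (((a + (i : Fin S)).val : ℝ) + 1))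
      = ∑ i ∈ Finset.range (S - a.val), ((2 * (a.val : ℝ) + 2) + 2 * (i : ℝ)) := by
    rw [← Finset.range_eq_Ico]
    exact Finset.sum_congr rfl (fun i hi => by
      rw [val_add_cast a (by have := Finset.mem_range.1 hi; omega)]; push_cast; ring)
  have e2 : ∑ i ∈ Finset.Ico (S - a.val) L, (2 * (((a + (i : Fin S)).val : ℝ) + 1))
      = ∑ i ∈ Finset.range (L - (S - a.val)), ((2:ℝ) + 2 * (i : ℝ)) := by
    rw [Finset.sum_Ico_eq_sum_range]
    exact Finset.sum_congr rfl (fun i hi => by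
      have hi' := Finset.mem_range.1 hi
      rw [val_add_cast' a (h1 := by omega) (h2 := by omega)]
      have : a.val + (S - a.val + i) - S = i := by omega
      rw [this]; push_cast; ring)
  rw [e1, e2, sum_lin, sum_lin]
  have c1 : ((S - a.val : ℕ) : ℝ) = (S:ℝ) - a.val := by
    push_cast [Nat.cast_sub (by omega : a.val ≤ S)]; ring
  have c2 : ((L - (S - a.val) : ℕ) : ℝ) = (a.val:ℝ) + L - S := by
    push_cast [Nat.cast_sub hK, Nat.cast_sub (by omega : a.val ≤ S)]; ring
  rw [c1, c2]; ring


lemma plus_mem_arc (hS : 5 ≤ S) (a : Fin S) {L i : ℕ} (hLS : L ≤ S - 1) (hi : i < L) :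
    ((a + (i : Fin S)) + 1 ∈ arc S a L) ↔ i + 1 < L := by
  have e : (a + (i : Fin S)) + 1 = a + ((i + 1 : ℕ) : Fin S) := by
    rw [cast_succ_fin]; ring
  rw [e, mem_arc (by omega)]
  have e2 : a + ((i + 1 : ℕ) : Fin S) - a = ((i + 1 : ℕ) : Fin S) := by ring
  rw [e2, Fin.val_cast_of_lt (by omega)]

lemma minus_mem_arc (hS : 5 ≤ S) (a : Fin S) {L i : ℕ} (hLS : L ≤ S - 1) (hi : i < L) :
    ((a + (i : Fin S)) - 1 ∈ arc S a L) ↔ i ≠ 0 := by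
  rcases Nat.eq_zero_or_pos i with h0 | h0
  · subst h0
    simp only [Nat.cast_zero, add_zero, ne_eq, not_true_eq_false, iff_false]
    rw [mem_arc (by omega)]
    have e2 : a - 1 - a = -1 := by ring
    rw [e2, neg_one_val hS]
    omega
  · have e : (a + (i : Fin S)) - 1 = a + ((i - 1 : ℕ) : Fin S) := by
      have : ((i : ℕ) : Fin S) = ((i - 1 : ℕ) : Fin S) + 1 := by
        rw [← cast_succ_fin]; congr 1; omega
      rw [this]; ring
    rw [e, mem_arc (by omega)]
    have e2 : a + ((i - 1 : ℕ) : Fin S) - a = ((i - 1 : ℕ) : Fin S) := by ring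
    rw [e2, Fin.val_cast_of_lt (by omega)]
    omega

lemma FS_arc (hS : 5 ≤ S) (a : Fin S) {L : ℕ} (hL1 : 1 ≤ L) (hLS : L ≤ S - 1) :
    FS S (arc S a L) = wgt S (a + ((L - 1 : ℕ) : Fin S)) + wgt S (a - 1) := by
  rw [FS, sum_arc a (by omega)]
  have key : ∀ i ∈ Finset.range L, brk S (arc S a L) (a + (i : Fin S)) =
      (if i = L - 1 then wgt S (a + (i : Fin S)) else 0) +
      (if i = 0 then wgt S (a + (i : Fin S) - 1) else 0) := by
    intro i hi
    have hi' := Finset.mem_range.1 hi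
    rw [brk]
    congr 1
    · have h1 := plus_mem_arc hS a hLS hi'
      have h2 : (¬ ((a + (i : Fin S)) + 1 ∈ arc S a L)) ↔ i = L - 1 := by
        rw [h1]; omega
      by_cases hc : i = L - 1
      · rw [if_pos (h2.2 hc), if_pos hc]
      · rw [if_neg (fun hx => hc (h2.1 hx)), if_neg hc]
    · have h1 := minus_mem_arc hS a hLS hi'
      have h2 : (¬ ((a + (i : Fin S)) - 1 ∈ arc S a L)) ↔ i = 0 := by
        rw [h1]; omega
      by_cases hc : i = 0
      · rw [if_pos (h2.2 hc), if_pos hc]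
      · rw [if_neg (fun hx => hc (h2.1 hx)), if_neg hc]
  rw [Finset.sum_congr rfl key, Finset.sum_add_distrib,
    Finset.sum_ite_eq' (Finset.range L) (L - 1) (fun i => wgt S (a + (i : Fin S))),
    Finset.sum_ite_eq' (Finset.range L) 0 (fun i => wgt S (a + (i : Fin S) - 1))]
  rw [if_pos (Finset.mem_range.2 (by omega)), if_pos (Finset.mem_range.2 (by omega))]
  simp


lemma patternB {D F W : ℝ} (hD : 1 ≤ D) (hFD : D ≤ (2 * F - 1) ^ 2) (hF : 1 ≤ F)
    (hW : 4 * W ≤ D - 1) : 2 * W ≤ F * (Real.sqrt D - 1) := by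
  have h1 : Real.sqrt D ≤ 2 * F - 1 := by
    rw [show (2 * F - 1) = Real.sqrt ((2 * F - 1) ^ 2) from
      (Real.sqrt_sq (by linarith)).symm]
    exact Real.sqrt_le_sqrt hFD
  have h2 : Real.sqrt D * Real.sqrt D = D := Real.mul_self_sqrt (by linarith)
  have h3 : 1 ≤ Real.sqrt D := by
    rw [show (1:ℝ) = Real.sqrt 1 by simp]
    exact Real.sqrt_le_sqrt hD
  nlinarith [mul_nonneg (sub_nonneg.2 (by linarith : (Real.sqrt D + 1) / 2 ≤ F))
    (sub_nonneg.2 h3)]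

lemma patternA {D : ℝ} {b : ℕ} (hb : 1 ≤ b) (hD : 0 ≤ D)
    (hW : 4 * ((b:ℝ) * (b + 1)) ≤ D - 1) :
    2 * ((b:ℝ) * (b + 1)) ≤ (1 + (b:ℝ)) * (Real.sqrt D - 1) := by
  have hb' : (1:ℝ) ≤ (b:ℝ) := by exact_mod_cast hb
  have h1 : 2 * (b:ℝ) + 1 ≤ Real.sqrt D := by
    rw [show (2*(b:ℝ)+1) = Real.sqrt ((2*(b:ℝ)+1)^2) from (Real.sqrt_sq (by linarith)).symm]
    exact Real.sqrt_le_sqrt (by nlinarith)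
  nlinarith [h1]

lemma patternC {D : ℝ} {al L : ℕ} (hal : 1 ≤ al) (hL : 1 ≤ L)
    (hFD : (2 * (2*(al:ℝ) + L) - 1) ^ 2 ≤ D) :
    2 * ((L:ℝ) * (2 * al + L + 1)) ≤ (2*(al:ℝ) + L) * (Real.sqrt D - 1) := by
  have hal' : (1:ℝ) ≤ (al:ℝ) := by exact_mod_cast hal
  have hL' : (1:ℝ) ≤ (L:ℝ) := by exact_mod_cast hL
  have h1 : 2 * (2*(al:ℝ) + L) - 1 ≤ Real.sqrt D := by
    rw [show (2 * (2*(al:ℝ) + L) - 1) = Real.sqrt ((2 * (2*(al:ℝ) + L) - 1)^2) from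
      (Real.sqrt_sq (by linarith)).symm]
    exact Real.sqrt_le_sqrt hFD
  nlinarith [h1, mul_nonneg (sub_nonneg.2 hal') (by linarith : (0:ℝ) ≤ (al:ℝ) + L)]


lemma wgt_sub_one_zero (hS : 5 ≤ S) {a : Fin S} (h : a.val = 0) : wgt S (a - 1) = 1 := by
  rw [sub_one_eq a hS]
  apply wgt_of_eq hS
  rw [val_add_cast a (by omega)]
  omega

lemma wgt_sub_one_pos (hS : 5 ≤ S) {a : Fin S} (h : 1 ≤ a.val) :
    wgt S (a - 1) = (a.val : ℝ) := by
  have ha := a.isLt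
  rw [sub_one_eq a hS]
  rw [wgt_of_lt hS (by rw [val_add_cast' a (by omega) (by omega)]; omega)]
  rw [val_add_cast' a (by omega) (by omega)]
  push_cast [Nat.cast_sub (by omega : S ≤ a.val + (S - 1))]
  push_cast [Nat.cast_sub (by omega : 1 ≤ S)]
  ring

lemma arc_bound (hS : 5 ≤ S) (a : Fin S) {L : ℕ} (hL1 : 1 ≤ L) (hLS : L ≤ S - 1)
    (hW : 4 * WS S (arc S a L) < 2 * (S:ℝ) * ((S:ℝ) + 1)) :
    2 * WS S (arc S a L)
      ≤ FS S (arc S a L) * (Real.sqrt (1 + 2 * (S:ℝ) * ((S:ℝ) + 1)) - 1) := by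
  have hD : (1:ℝ) ≤ 1 + 2 * (S:ℝ) * ((S:ℝ) + 1) := by
    have h0 : (0:ℝ) ≤ 2 * (S:ℝ) * ((S:ℝ) + 1) := by positivity
    linarith
  have ha := a.isLt
  have hS' : (5:ℝ) ≤ (S:ℝ) := by exact_mod_cast hS
  rw [FS_arc hS a hL1 hLS]
  by_cases hwrap : a.val + L ≤ S
  · -- no wrap
    rw [WS_arc_nowrap a hwrap] at hW ⊢
    by_cases hz : a.val = 0
    · -- pattern A
      have hr : wgt S (a + ((L - 1 : ℕ) : Fin S)) = (L:ℝ) := by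
        rw [wgt_of_lt hS (by rw [val_add_cast a (by omega)]; omega),
          val_add_cast a (by omega)]
        push_cast [Nat.cast_sub hL1, hz]; ring
      rw [hr, wgt_sub_one_zero hS hz, hz]
      have := patternA (D := 1 + 2 * (S:ℝ) * ((S:ℝ) + 1)) hL1 (by linarith)
        (by push_cast; nlinarith)
      push_cast at this ⊢
      nlinarith [this]
    · have hz1 : 1 ≤ a.val := by omega
      rw [wgt_sub_one_pos hS hz1]
      by_cases heq : a.val + L = S
      · -- right end hits S : pattern B with F = a.val + 1
        have hr : wgt S (a + ((L - 1 : ℕ) : Fin S)) = 1 := by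
          apply wgt_of_eq hS
          rw [val_add_cast a (by omega)]
          omega
        rw [hr]
        have hB := patternB (D := 1 + 2 * (S:ℝ) * ((S:ℝ) + 1)) (F := 1 + (a.val:ℝ))
          (W := (L:ℝ) * (2 * a.val + L + 1)) hD
          (by
            have hL' : (L:ℝ) = (S:ℝ) - a.val := by
              have h9 : (a.val:ℝ) + L = (S:ℝ) := by exact_mod_cast heq
              linarith
            nlinarith [hW])
          (by have h0 : (0:ℝ) ≤ (a.val:ℝ) := Nat.cast_nonneg _; linarith)
          (by linarith)
        linarith [hB]
      · -- interior: pattern B or C with F = 2 a.val + L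
        have hr : wgt S (a + ((L - 1 : ℕ) : Fin S)) = (a.val:ℝ) + L := by
          rw [wgt_of_lt hS (by rw [val_add_cast a (by omega)]; omega),
            val_add_cast a (by omega)]
          push_cast [Nat.cast_sub hL1]; ring
        rw [hr]
        have hz1' : (1:ℝ) ≤ (a.val:ℝ) := by exact_mod_cast hz1
        have hL1' : (1:ℝ) ≤ (L:ℝ) := by exact_mod_cast hL1
        rcases le_total (1 + 2 * (S:ℝ) * ((S:ℝ) + 1)) ((2 * (2*(a.val:ℝ) + L) - 1)^2)
          with hc | hc
        · have hB := patternB (D := 1 + 2 * (S:ℝ) * ((S:ℝ) + 1))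
            (F := 2 * (a.val:ℝ) + L) (W := (L:ℝ) * (2 * a.val + L + 1)) hD hc
            (by linarith) (by linarith)
          linarith [hB]
        · have hC := patternC (D := 1 + 2 * (S:ℝ) * ((S:ℝ) + 1)) hz1 hL1 hc
          linarith [hC]
  · -- wrap case: pattern B with F = a.val + (a.val + L - S)
    push_neg at hwrap
    rw [WS_arc_wrap a hwrap (by omega)] at hW ⊢
    have hz1 : 1 ≤ a.val := by omega
    have hz1' : (1:ℝ) ≤ (a.val:ℝ) := by exact_mod_cast hz1
    rw [wgt_sub_one_pos hS hz1]
    have hr : wgt S (a + ((L - 1 : ℕ) : Fin S)) = (a.val:ℝ) + L - S := by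
      rw [wgt_of_lt hS (by rw [val_add_cast' a (by omega) (by omega)]; omega),
        val_add_cast' a (by omega) (by omega)]
      push_cast [Nat.cast_sub (by omega : S ≤ a.val + (L - 1)),
        Nat.cast_sub (by omega : 1 ≤ L)]
      ring
    rw [hr]
    set M : ℝ := (a.val:ℝ) + L - S with hM
    have hM1 : 1 ≤ M := by
      have : S + 1 ≤ a.val + L := by omega
      have := (by exact_mod_cast this : (S:ℝ) + 1 ≤ (a.val:ℝ) + L)
      rw [hM]; linarith
    have hB := patternB (D := 1 + 2 * (S:ℝ) * ((S:ℝ) + 1))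
      (F := M + (a.val:ℝ))
      (W := (S:ℝ) * (S+1) - a.val * (a.val + 1) + M * (M + 1)) hD
      (by nlinarith [hW, mul_nonneg (by linarith : (0:ℝ) ≤ (a.val:ℝ)) (by linarith : (0:ℝ) ≤ M - 1)])
      (by linarith) (by linarith)
    linarith [hB]


lemma brk_congr {A B : Finset (Fin S)} {x : Fin S}
    (h1 : (x + 1 ∈ A) ↔ (x + 1 ∈ B)) (h2 : (x - 1 ∈ A) ↔ (x - 1 ∈ B)) :
    brk S A x = brk S B x := by
  rw [brk, brk]
  congr 1
  · by_cases hc : x + 1 ∈ A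
    · rw [if_neg (by simpa using hc), if_neg (by simpa using h1.1 hc)]
    · rw [if_pos hc, if_pos (fun hx => hc (h1.2 hx))]
  · by_cases hc : x - 1 ∈ A
    · rw [if_neg (by simpa using hc), if_neg (by simpa using h2.1 hc)]
    · rw [if_pos hc, if_pos (fun hx => hc (h2.2 hx))]

lemma adj_plus (hS : 5 ≤ S) {a : Fin S} {L : ℕ} (hLS : L ≤ S - 1) {y : Fin S}
    (hmem : y + 1 ∈ arc S a L) : y = a - 1 ∨ y ∈ arc S a L := by
  have he := (mem_arc (by omega : L ≤ S)).1 hmem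
  have hye : y + 1 = a + (((y + 1 - a).val : ℕ) : Fin S) := by
    rw [Fin.cast_val_eq_self]; ring
  set e := (y + 1 - a).val with hedef
  rcases Nat.eq_zero_or_pos e with h0 | h0
  · left
    rw [h0] at hye; simp at hye
    rw [← hye]; ring
  · right
    have h9 : y = a + ((e - 1 : ℕ) : Fin S) := by
      have h8 : ((e : ℕ) : Fin S) = ((e - 1 : ℕ) : Fin S) + 1 := by
        rw [← cast_succ_fin]; congr 1; omega
      have := hye
      rw [h8] at this
      have h7 : y + 1 = (a + ((e - 1 : ℕ) : Fin S)) + 1 := by rw [this]; ring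
      exact add_right_cancel h7
    rw [h9, mem_arc (by omega : L ≤ S)]
    have h6 : a + ((e - 1 : ℕ) : Fin S) - a = ((e - 1 : ℕ) : Fin S) := by ring
    rw [h6, Fin.val_cast_of_lt (by omega)]
    omega

lemma adj_minus (hS : 5 ≤ S) {a : Fin S} {L : ℕ} (hLS : L ≤ S - 1) {y : Fin S}
    (hmem : y - 1 ∈ arc S a L) : y = a + (L : Fin S) ∨ y ∈ arc S a L := by
  have he := (mem_arc (by omega : L ≤ S)).1 hmem
  have hye : y - 1 = a + (((y - 1 - a).val : ℕ) : Fin S) := by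
    rw [Fin.cast_val_eq_self]; ring
  set e := (y - 1 - a).val with hedef
  have hy : y = a + ((e + 1 : ℕ) : Fin S) := by
    rw [cast_succ_fin]
    have : y = (y - 1) + 1 := by ring
    rw [this, hye]; ring
  by_cases hc : e + 1 = L
  · left; rw [hy, hc]
  · right
    rw [hy, mem_arc (by omega : L ≤ S)]
    have h6 : a + ((e + 1 : ℕ) : Fin S) - a = ((e + 1 : ℕ) : Fin S) := by ring
    rw [h6, Fin.val_cast_of_lt (by omega)]
    omega

lemma WS_univ (hS : 5 ≤ S) : WS S Finset.univ = (S:ℝ) * ((S:ℝ) + 1) := by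
  rw [WS]
  rw [Fin.sum_univ_eq_sum_range (fun i => 2 * ((i:ℝ) + 1)) S]
  rw [Finset.sum_congr rfl (fun i (_ : i ∈ Finset.range S) =>
    (by ring : (2 * ((i:ℝ) + 1)) = (2:ℝ) + 2 * (i:ℝ))), sum_lin]
  ring

lemma key (hS : 5 ≤ S) : ∀ (n : ℕ) (A : Finset (Fin S)), A.card ≤ n → A.Nonempty →
    4 * WS S A < 2 * (S:ℝ) * ((S:ℝ) + 1) →
    2 * WS S A ≤ FS S A * (Real.sqrt (1 + 2 * (S:ℝ) * ((S:ℝ) + 1)) - 1) := by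
  intro n
  induction n with
  | zero =>
    intro A hcard hne _
    rcases hne with ⟨x, hx⟩
    have := Finset.card_pos.2 ⟨x, hx⟩
    omega
  | succ n ih =>
    intro A hcard hne hW
    have hS0 : 0 < S := by omega
    have hSr : (0:ℝ) < (S:ℝ) := by exact_mod_cast hS0
    have hAu : A ≠ Finset.univ := by
      intro h
      rw [h, WS_univ hS] at hW
      nlinarith
    have hex : ∃ z, z ∉ A := by
      by_contra h
      push_neg at h
      exact hAu (Finset.eq_univ_iff_forall.2 h)
    obtain ⟨z, hz⟩ := hex
    obtain ⟨x, hx⟩ := hne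
    have hexq : ∃ t : ℕ, x - (t : Fin S) ∉ A := by
      refine ⟨(x - z).val, ?_⟩
      rw [Fin.cast_val_eq_self]
      have h9 : x - (x - z) = z := by ring
      rw [h9]; exact hz
    set q := Nat.find hexq with hqdef
    have hq : x - (q : Fin S) ∉ A := Nat.find_spec hexq
    have hq0 : 0 < q := by
      rcases Nat.eq_zero_or_pos q with h0 | h0
      · exfalso; rw [h0] at hq; simp at hq; exact hq hx
      · exact h0
    set a := x - ((q - 1 : ℕ) : Fin S) with hadef
    have haA : a ∈ A := not_not.1 (Nat.find_min hexq (show q - 1 < q by omega))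
    have ham : a - 1 ∉ A := by
      have h9 : a - 1 = x - (q : Fin S) := by
        rw [hadef]
        have h8 : ((q : ℕ) : Fin S) = ((q - 1 : ℕ) : Fin S) + 1 := by
          rw [← cast_succ_fin]; congr 1; omega
        rw [h8]; ring
      rw [h9]; exact hq
    have hexL : ∃ r : ℕ, a + (r : Fin S) ∉ A := ⟨S - 1, by rw [← sub_one_eq a hS]; exact ham⟩
    set L := Nat.find hexL with hLdef
    have haL : a + (L : Fin S) ∉ A := Nat.find_spec hexL
    have hL0 : 0 < L := by
      rcases Nat.eq_zero_or_pos L with h0 | h0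
      · exfalso; rw [h0] at haL; simp at haL; exact haL haA
      · exact h0
    have hLS : L ≤ S - 1 := Nat.find_min' hexL (by rw [← sub_one_eq a hS]; exact ham)
    have hall : ∀ i, i < L → a + (i : Fin S) ∈ A := fun i h =>
      not_not.1 (Nat.find_min hexL h)
    have hsub : arc S a L ⊆ A := by
      intro j hj
      have h2 := (mem_arc (by omega : L ≤ S)).1 hj
      have h3 : j = a + (((j - a).val : ℕ) : Fin S) := by
        rw [Fin.cast_val_eq_self]; ring
      rw [h3]; exact hall _ h2
    have haAR : a ∈ arc S a L := by
      rw [mem_arc (by omega : L ≤ S)]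
      have h9 : a - a = 0 := by ring
      rw [h9]; simpa using hL0
    set A' := A \ arc S a L with hA'def
    -- brk congruences
    have hcongr1 : ∀ y ∈ arc S a L, brk S A y = brk S (arc S a L) y := by
      intro y hy
      have hd := (mem_arc (by omega : L ≤ S)).1 hy
      have hyd : y = a + (((y - a).val : ℕ) : Fin S) := by
        rw [Fin.cast_val_eq_self]; ring
      set d := (y - a).val with hddef
      apply brk_congr
      · rw [hyd, plus_mem_arc hS a hLS hd]
        by_cases hc : d + 1 < L
        · have h9 : (a + (d : Fin S)) + 1 = a + ((d + 1 : ℕ) : Fin S) := by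
            rw [cast_succ_fin]; ring
          rw [h9]
          simp only [hc, iff_true]
          exact hall _ hc
        · have hdL : d + 1 = L := by omega
          have h9 : (a + (d : Fin S)) + 1 = a + (L : Fin S) := by
            rw [← hdL, cast_succ_fin]; ring
          rw [h9]
          simp only [hc, iff_false]
          exact haL
      · rw [hyd, minus_mem_arc hS a hLS hd]
        rcases Nat.eq_zero_or_pos d with h0 | h0
        · have h9 : (a + (d : Fin S)) - 1 = a - 1 := by rw [h0]; simp
          rw [h9]
          simp only [h0, ne_eq, not_true_eq_false, iff_false]
          exact ham
        · have h9 : (a + (d : Fin S)) - 1 = a + ((d - 1 : ℕ) : Fin S) := by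
            have h8 : ((d : ℕ) : Fin S) = ((d - 1 : ℕ) : Fin S) + 1 := by
              rw [← cast_succ_fin]; congr 1; omega
            rw [h8]; ring
          rw [h9]
          simp only [show d ≠ 0 by omega, ne_eq, not_false_eq_true, iff_true]
          exact hall _ (by omega)
    have hcongr2 : ∀ y ∈ A', brk S A y = brk S A' y := by
      intro y hy
      have hyA : y ∈ A := (Finset.mem_sdiff.1 hy).1
      apply brk_congr
      · rw [hA'def, Finset.mem_sdiff]
        constructor
        · intro h
          refine ⟨h, fun hmem => ?_⟩
          rcases adj_plus hS hLS hmem with h1 | h1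
          · rw [h1] at hyA; exact ham hyA
          · exact (Finset.mem_sdiff.1 hy).2 h1
        · exact fun h => h.1
      · rw [hA'def, Finset.mem_sdiff]
        constructor
        · intro h
          refine ⟨h, fun hmem => ?_⟩
          rcases adj_minus hS hLS hmem with h1 | h1
          · rw [h1] at hyA; exact haL hyA
          · exact (Finset.mem_sdiff.1 hy).2 h1
        · exact fun h => h.1
    -- sum splits
    have hWsplit : WS S A = WS S A' + WS S (arc S a L) := by
      rw [WS, WS, WS, ← Finset.sum_sdiff hsub]
    have hFsplit : FS S A = FS S A' + FS S (arc S a L) := by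
      rw [FS, ← Finset.sum_sdiff hsub, FS, FS]
      congr 1
      · exact Finset.sum_congr rfl hcongr2
      · exact Finset.sum_congr rfl hcongr1
    -- apply arc bound
    have hWA'0 : 0 ≤ WS S A' := WS_nonneg A'
    have hWAR0 : 0 ≤ WS S (arc S a L) := WS_nonneg _
    have harc := arc_bound hS a hL0 hLS (by rw [hWsplit] at hW; linarith)
    -- A' part
    rcases Finset.eq_empty_or_nonempty A' with hA'e | hA'ne
    · have h1 : WS S A' = 0 := by rw [hA'e, WS]; simp
      have h2 : FS S A' = 0 := by rw [hA'e, FS]; simp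
      rw [hWsplit, hFsplit, h1, h2]
      linarith
    · have hcardlt : A'.card ≤ n := by
        have hss : A' ⊂ A := Finset.sdiff_ssubset hsub ⟨a, haAR⟩
        have := Finset.card_lt_card hss
        omega
      have hih := ih A' hcardlt hA'ne (by rw [hWsplit] at hW; linarith)
      rw [hWsplit, hFsplit]
      linarith


theorem main (S : ℕ) (hS : 5 ≤ S) (hodd : S % 2 = 1)
    [NeZero S]
    (pi : Fin S → ℝ)
    (hpi : ∀ k : Fin S, pi k = 2 * ((k.val : ℝ) + 1) / ((S : ℝ) * ((S : ℝ) + 1)))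
    (P : Matrix (Fin S) (Fin S) ℝ)
    (hP : ∀ x y : Fin S, x ≠ y →
      P x y = (if y = x + 1 ∨ y = x - 1 then (1 : ℝ) / 2 else 0) *
        min 1 (pi y / pi x))
    (hPdiag : ∀ x : Fin S, P x x = 1 - ∑ y ∈ Finset.univ.filter (· ≠ x), P x y) :
    (1 + Real.sqrt (1 + 2 * (S : ℝ) * ((S : ℝ) + 1))) / ((S : ℝ) * ((S : ℝ) + 1)) ≤
      sInf {r : ℝ | ∃ A : Finset (Fin S), A.Nonempty ∧ (∑ x ∈ A, pi x) < 1 / 2 ∧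
        r = (∑ x ∈ A, pi x * ∑ y ∈ Aᶜ, P x y) / ∑ x ∈ A, pi x} ∧
    sInf {r : ℝ | ∃ A : Finset (Fin S), A.Nonempty ∧ (∑ x ∈ A, pi x) < 1 / 2 ∧
        r = (∑ x ∈ A, pi x * ∑ y ∈ Aᶜ, P x y) / ∑ x ∈ A, pi x} ≤
      2 / ((S : ℝ) + 1) := by
  have hSr : (5:ℝ) ≤ (S:ℝ) := by exact_mod_cast hS
  set N : ℝ := (S:ℝ) * ((S:ℝ) + 1) with hNdef
  have hN : (0:ℝ) < N := by positivity
  set D : ℝ := 1 + 2 * (S:ℝ) * ((S:ℝ) + 1) with hDdef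
  have hD1 : (1:ℝ) ≤ D := by nlinarith
  have hsqD : Real.sqrt D * Real.sqrt D = D := Real.mul_self_sqrt (by linarith)
  have hsq1 : (1:ℝ) ≤ Real.sqrt D := by
    rw [show (1:ℝ) = Real.sqrt 1 by simp]
    exact Real.sqrt_le_sqrt hD1
  have hpipos : ∀ x : Fin S, 0 < pi x := by
    intro x; rw [hpi]; positivity
  -- the π-weight of a set
  have hwt : ∀ A : Finset (Fin S), ∑ x ∈ A, pi x = WS S A / N := by
    intro A
    rw [WS, Finset.sum_div]
    exact Finset.sum_congr rfl (fun x _ => by rw [hpi])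
  -- key pointwise min computation
  have hminc : ∀ x y : Fin S, pi x * ((1/2) * min 1 (pi y / pi x))
      = min ((x.val:ℝ) + 1) ((y.val:ℝ) + 1) / N := by
    intro x y
    have hx := hpipos x
    have hy := hpipos y
    have hxv : (0:ℝ) < (x.val:ℝ) + 1 := by positivity
    have hyv : (0:ℝ) < (y.val:ℝ) + 1 := by positivity
    rcases le_total ((x.val:ℝ) + 1) ((y.val:ℝ) + 1) with h | h
    · rw [min_eq_left h]
      have hple : pi x ≤ pi y := by
        rw [hpi, hpi, div_le_div_iff₀ hN hN]
        nlinarith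
      have hq : (1:ℝ) ≤ pi y / pi x := (one_le_div hx).2 hple
      rw [min_eq_left hq, hpi]
      field_simp
    · rw [min_eq_right h]
      have hple : pi y ≤ pi x := by
        rw [hpi, hpi, div_le_div_iff₀ hN hN]
        nlinarith
      have hq : pi y / pi x ≤ 1 := (div_le_one hx).2 hple
      rw [min_eq_right hq, hpi y, hpi x]
      field_simp
  -- the flow identity
  have hflow : ∀ A : Finset (Fin S), ∑ x ∈ A, pi x * ∑ y ∈ Aᶜ, P x y = FS S A / N := by
    intro A
    rw [FS, Finset.sum_div]
    apply Finset.sum_congr rfl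
    intro x hxA
    have h2ne : (x + 1 : Fin S) ≠ x - 1 := by
      intro h
      have h2 : ((2:ℕ) : Fin S) = 0 := by
        have := sub_eq_zero.2 h
        push_cast
        rw [← this]; ring
      have := congrArg Fin.val h2
      rw [Fin.val_cast_of_lt (by omega : 2 < S), Fin.val_zero] at this
      omega
    have hPy : ∀ y ∈ Aᶜ, P x y
        = (if y = x + 1 then (1/2) * min 1 (pi y / pi x) else 0)
          + (if y = x - 1 then (1/2) * min 1 (pi y / pi x) else 0) := by
      intro y hy
      have hxy : x ≠ y := by
        intro h
        exact (Finset.mem_compl.1 hy) (h ▸ hxA)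
      rw [hP x y hxy]
      by_cases h1 : y = x + 1
      · rw [if_pos (Or.inl h1), if_pos h1, if_neg (by rw [h1]; exact h2ne)]
        ring
      · by_cases h2 : y = x - 1
        · rw [if_pos (Or.inr h2), if_neg h1, if_pos h2]; ring
        · rw [if_neg (by tauto), if_neg h1, if_neg h2]; ring
    rw [Finset.sum_congr rfl hPy, Finset.sum_add_distrib,
      Finset.sum_ite_eq' Aᶜ (x + 1) (fun y => (1/2) * min 1 (pi y / pi x)),
      Finset.sum_ite_eq' Aᶜ (x - 1) (fun y => (1/2) * min 1 (pi y / pi x))]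
    rw [brk]
    rw [mul_add, add_div]
    simp only [Finset.mem_compl]
    congr 1
    · by_cases hc : x + 1 ∉ A
      · rw [if_pos hc, if_pos hc, hminc x (x + 1), wgt]
      · rw [if_neg hc, if_neg hc, mul_zero, zero_div]
    · have hwgt2 : wgt S (x - 1) = min ((x.val:ℝ) + 1) (((x - 1).val:ℝ) + 1) := by
        rw [wgt, show (x - 1) + 1 = x from by ring]
        exact min_comm _ _
      by_cases hc : x - 1 ∉ A
      · rw [if_pos hc, if_pos hc, hminc x (x - 1), hwgt2]
      · rw [if_neg hc, if_neg hc, mul_zero, zero_div]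
  -- lower bound for every member of the set
  have hlb : ∀ r ∈ {r : ℝ | ∃ A : Finset (Fin S), A.Nonempty ∧ (∑ x ∈ A, pi x) < 1 / 2 ∧
      r = (∑ x ∈ A, pi x * ∑ y ∈ Aᶜ, P x y) / ∑ x ∈ A, pi x},
      (1 + Real.sqrt D) / N ≤ r := by
    rintro r ⟨A, hne, hhalf, rfl⟩
    have hWpos : 0 < WS S A :=
      Finset.sum_pos (fun x _ => by positivity) hne
    have hhalf' : 4 * WS S A < 2 * (S:ℝ) * ((S:ℝ) + 1) := by
      rw [hwt, div_lt_iff₀ hN] at hhalf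
      nlinarith
    have hkey := key hS A.card A le_rfl hne hhalf'
    rw [← hDdef] at hkey
    have hDN : D = 1 + 2 * N := by rw [hDdef, hNdef]; ring
    rw [hflow, hwt]
    have hW0 : WS S A ≠ 0 := ne_of_gt hWpos
    have hr : FS S A / N / (WS S A / N) = FS S A / WS S A := by
      field_simp
    rw [hr, div_le_div_iff₀ hN hWpos]
    have hmul := mul_le_mul_of_nonneg_right hkey
      (show (0:ℝ) ≤ Real.sqrt D + 1 by linarith)
    nlinarith [hmul, hsqD, hDN, FS_nonneg (S := S) A]
  -- the witness set
  set m : ℕ := (S + 1) / 2 with hmdef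
  have hm2 : 2 * m = S + 1 := by omega
  have hmS : m ≤ S - 1 := by omega
  have hm1 : 1 ≤ m := by omega
  have hmr : (2:ℝ) * (m:ℝ) = (S:ℝ) + 1 := by exact_mod_cast hm2
  have hz0 : ((0 : Fin S)).val = 0 := rfl
  have hWm : WS S (arc S 0 m) = (m:ℝ) * ((m:ℝ) + 1) := by
    rw [WS_arc_nowrap 0 (by rw [hz0]; omega), hz0]
    push_cast; ring
  have hFm : FS S (arc S 0 m) = (m:ℝ) + 1 := by
    rw [FS_arc hS 0 hm1 hmS]
    rw [wgt_sub_one_zero hS hz0]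
    rw [wgt_of_lt hS (by rw [val_add_cast 0 (by rw [hz0]; omega), hz0]; omega)]
    rw [val_add_cast 0 (by rw [hz0]; omega), hz0]
    push_cast [Nat.cast_sub hm1]
    ring
  have hA0ne : (arc S 0 m).Nonempty :=
    Finset.Nonempty.image ⟨0, Finset.mem_range.2 (by omega)⟩ _
  have hA0half : (∑ x ∈ arc S 0 m, pi x) < 1 / 2 := by
    rw [hwt, hWm, div_lt_iff₀ hN]
    nlinarith
  have hmem0 : ((∑ x ∈ arc S 0 m, pi x * ∑ y ∈ (arc S 0 m)ᶜ, P x y)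
      / ∑ x ∈ arc S 0 m, pi x)
      ∈ {r : ℝ | ∃ A : Finset (Fin S), A.Nonempty ∧ (∑ x ∈ A, pi x) < 1 / 2 ∧
        r = (∑ x ∈ A, pi x * ∑ y ∈ Aᶜ, P x y) / ∑ x ∈ A, pi x} :=
    ⟨arc S 0 m, hA0ne, hA0half, rfl⟩
  have hval0 : (∑ x ∈ arc S 0 m, pi x * ∑ y ∈ (arc S 0 m)ᶜ, P x y)
      / ∑ x ∈ arc S 0 m, pi x = 2 / ((S:ℝ) + 1) := by
    rw [hflow, hwt, hWm, hFm]
    have hmr' : (0:ℝ) < (m:ℝ) := by exact_mod_cast hm1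
    rw [← hmr]
    field_simp
  constructor
  · exact le_csInf ⟨_, hmem0⟩ hlb
  · calc sInf _ ≤ _ := csInf_le ⟨(1 + Real.sqrt D) / N, hlb⟩ hmem0
      _ = 2 / ((S:ℝ) + 1) := hval0

end MH16

/-- conductance bounds for the nearest-neighbour MH chain on the
cycle {1,…,S} (S odd, S ≥ 5) with target π(k) = 2k/(S(S+1)):
(1 + √(1 + 2S(S+1)))/(S(S+1)) ≤ h(P) ≤ 2/(S+1), where h(P) is the infimum of
(Σ_{x∈A} π(x)P(x,Aᶜ))/π(A) over nonempty sets A with π(A) < 1/2.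
States are encoded by `x : Fin S` with `x.val = k − 1`. -/
theorem mh_linear_cycle_conductance (S : ℕ) (hS : 5 ≤ S) (hodd : S % 2 = 1)
    [NeZero S]
    (pi : Fin S → ℝ)
    (hpi : ∀ k : Fin S, pi k = 2 * ((k.val : ℝ) + 1) / ((S : ℝ) * ((S : ℝ) + 1)))
    (P : Matrix (Fin S) (Fin S) ℝ)
    (hP : ∀ x y : Fin S, x ≠ y →
      P x y = (if y = x + 1 ∨ y = x - 1 then (1 : ℝ) / 2 else 0) *
        min 1 (pi y / pi x))
    (hPdiag : ∀ x : Fin S, P x x = 1 - ∑ y ∈ Finset.univ.filter (· ≠ x), P x y) :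
    (1 + Real.sqrt (1 + 2 * (S : ℝ) * ((S : ℝ) + 1))) / ((S : ℝ) * ((S : ℝ) + 1)) ≤
      sInf {r : ℝ | ∃ A : Finset (Fin S), A.Nonempty ∧ (∑ x ∈ A, pi x) < 1 / 2 ∧
        r = (∑ x ∈ A, pi x * ∑ y ∈ Aᶜ, P x y) / ∑ x ∈ A, pi x} ∧
    sInf {r : ℝ | ∃ A : Finset (Fin S), A.Nonempty ∧ (∑ x ∈ A, pi x) < 1 / 2 ∧
        r = (∑ x ∈ A, pi x * ∑ y ∈ Aᶜ, P x y) / ∑ x ∈ A, pi x} ≤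
      2 / ((S : ℝ) + 1) := by
  exact MH16.main S hS hodd pi hpi P hP hPdiag
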